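/- Assume k is nonincreasing on [0,∞), k(diam X) > 0, and Σ_{x ∈ X} m(x) = 1. Fix i ∈ X and let B₀ = B(i, min_{z ≠ i} d(i,z)) be the smallest ball containing i with at least two elements. Then the improper integral ∫₀^∞ ( (exp(tL))_{i,i}/m(i) − 1 ) dt converges and equals −(1/λ(B₀))·( 1/m(i) − 1/m(B₀) ) + Σ_T (−1/λ(T⁺))·( 1/m(T) − 1/m(T⁺) ), where the sum ranges over all balls T of X with B₀ ⊆ T ⊊ X. (The CTMC centrality of i is the reciprocal of this quantity.) -/

import Mathlib

open scoped Classical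
open Finset

/-- Closed ball of radius `r` around `x`, as a finset. -/
noncomputable def uball {X : Type*} [Fintype X] (d : X → X → ℝ) (x : X) (r : ℝ) : Finset X :=
  Finset.univ.filter fun y => d x y ≤ r

/-- A ball of the ultrametric space: a closed ball of nonnegative radius. -/
def IsBall {X : Type*} [Fintype X] (d : X → X → ℝ) (B : Finset X) : Prop :=
  ∃ x r, 0 ≤ r ∧ B = uball d x r

/-- Diameter of a finite set: maximum of `d` over `B × B` (`0` if `B` is empty). -/
noncomputable def fdiam {X : Type*} [Fintype X] (d : X → X → ℝ) (B : Finset X) : ℝ :=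
  if h : (B ×ˢ B).Nonempty then (B ×ˢ B).sup' h fun p => d p.1 p.2 else 0

/-- Mass of a set: `m(B) = Σ_{x ∈ B} m(x)`. -/
noncomputable def mass {X : Type*} [Fintype X] (m : X → ℝ) (B : Finset X) : ℝ :=
  ∑ x ∈ B, m x

/-- The eigenvalue attached to a ball `B`, computed from a base point `x₀ ∈ B`:
`λ(B) = −(Σ_{y ∉ B} k(d(x₀,y))·m(y) + k(diam B)·m(B))`. -/
noncomputable def lamB {X : Type*} [Fintype X] [DecidableEq X]
    (d : X → X → ℝ) (k : ℝ → ℝ) (m : X → ℝ) (B : Finset X) (x₀ : X) : ℝ :=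
  -((∑ y ∈ Bᶜ, k (d x₀ y) * m y) + k (fdiam d B) * mass m B)

/-- The parent radius of a ball `B ⊊ X` seen from `x ∈ B`: `r⁺ = min{d(x,y) : y ∉ B}`. -/
noncomputable def parentR {X : Type*} [Fintype X] [DecidableEq X]
    (d : X → X → ℝ) (B : Finset X) (x : X) : ℝ :=
  if h : (Bᶜ : Finset X).Nonempty then Bᶜ.inf' h fun y => d x y else 0

/-- The parent ball `B⁺ = B(x, r⁺)` of `B ⊊ X`, computed from a base point `x ∈ B`. -/
noncomputable def parentB {X : Type*} [Fintype X] [DecidableEq X]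
    (d : X → X → ℝ) (B : Finset X) (x : X) : Finset X :=
  uball d x (parentR d B x)

/-- The ultrametric Laplacian matrix:
`L x y = k(d(x,y))·m(y)` off the diagonal and `L x x = −Σ_{z ≠ x} k(d(x,z))·m(z)`. -/
noncomputable def ultraLap {X : Type*} [Fintype X] [DecidableEq X]
    (d : X → X → ℝ) (k : ℝ → ℝ) (m : X → ℝ) : Matrix X X ℝ :=
  fun x y => if y = x then -(∑ z ∈ ({x}ᶜ : Finset X), k (d x z) * m z) else k (d x y) * m y

/-- The smallest ball containing `x` and `y` and having at least two elements:
`B(x, d(x,y))` for `x ≠ y`, and `B(x, min_{z ≠ x} d(x,z))` for `x = y`. -/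
noncomputable def sball {X : Type*} [Fintype X] [DecidableEq X]
    (d : X → X → ℝ) (x y : X) : Finset X :=
  if x = y then
    (if h : (({x}ᶜ : Finset X)).Nonempty then
      uball d x ((({x}ᶜ : Finset X)).inf' h fun z => d x z)
     else uball d x 0)
  else uball d x (d x y)

set_option linter.unusedSectionVars false
set_option linter.unusedVariables false

lemma exp_mulVec_eigen {n : Type*} [Fintype n] [DecidableEq n]
    (A : Matrix n n ℝ) (v : n → ℝ) (c : ℝ) (h : A.mulVec v = c • v) :
    (NormedSpace.exp A).mulVec v = Real.exp c • v := by
  letI : SeminormedRing (Matrix n n ℝ) := Matrix.linftyOpSemiNormedRing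
  letI : NormedRing (Matrix n n ℝ) := Matrix.linftyOpNormedRing
  letI : NormedAlgebra ℝ (Matrix n n ℝ) := Matrix.linftyOpNormedAlgebra
  have hpow : ∀ j : ℕ, (A ^ j).mulVec v = (c ^ j) • v := by
    intro j
    induction j with
    | zero => simp [Matrix.one_mulVec]
    | succ j ih =>
      rw [pow_succ', ← Matrix.mulVec_mulVec, ih, Matrix.mulVec_smul, h, smul_smul, pow_succ', mul_comm]
  let φ : Matrix n n ℝ →ₗ[ℝ] (n → ℝ) :=
    { toFun := fun M => M.mulVec v
      map_add' := fun M N => Matrix.add_mulVec M N v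
      map_smul' := fun a M => Matrix.smul_mulVec a M v }
  have hφcont : Continuous φ := φ.continuous_of_finiteDimensional
  let Φ : Matrix n n ℝ →L[ℝ] (n → ℝ) := ⟨φ, hφcont⟩
  have hsum : Summable fun j : ℕ => (((Nat.factorial j : ℝ))⁻¹) • A ^ j :=
    NormedSpace.expSeries_summable' (𝕂 := ℝ) A
  have hout : (NormedSpace.exp A).mulVec v
      = ∑' j : ℕ, (((Nat.factorial j : ℝ))⁻¹) • ((c ^ j) • v) := by
    have := Φ.map_tsum hsum
    rw [NormedSpace.exp_eq_tsum (𝕂 := ℝ)]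
    calc Matrix.mulVec (∑' j : ℕ, (((Nat.factorial j : ℝ))⁻¹) • A ^ j) v
        = Φ (∑' j : ℕ, (((Nat.factorial j : ℝ))⁻¹) • A ^ j) := rfl
      _ = ∑' j : ℕ, Φ ((((Nat.factorial j : ℝ))⁻¹) • A ^ j) := this
      _ = ∑' j : ℕ, (((Nat.factorial j : ℝ))⁻¹) • ((c ^ j) • v) := by
          refine tsum_congr fun j => ?_
          rw [map_smul]
          congr 1
          exact hpow j
  rw [hout]
  have hs : Summable fun j : ℕ => (((Nat.factorial j : ℝ))⁻¹) * c ^ j :=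
    NormedSpace.expSeries_summable' (𝕂 := ℝ) c
  calc (∑' j : ℕ, (((Nat.factorial j : ℝ))⁻¹) • ((c ^ j) • v))
      = ∑' j : ℕ, ((((Nat.factorial j : ℝ))⁻¹) * c ^ j) • v := by
        refine tsum_congr fun j => ?_; rw [smul_smul]
    _ = (∑' j : ℕ, (((Nat.factorial j : ℝ))⁻¹) * c ^ j) • v := hs.tsum_smul_const v
    _ = Real.exp c • v := by
        congr 1
        rw [Real.exp_eq_exp_ℝ, NormedSpace.exp_eq_tsum (𝕂 := ℝ)]
        simp [smul_eq_mul]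





section Aux
variable {X : Type*} [Fintype X] [DecidableEq X] {d : X → X → ℝ}

lemma mem_uball {x y : X} {r : ℝ} : y ∈ uball d x r ↔ d x y ≤ r := by
  simp [uball]

lemma d_self (hd0 : ∀ x y, d x y = 0 ↔ x = y) (x : X) : d x x = 0 := (hd0 x x).2 rfl

lemma d_nonneg (hd0 : ∀ x y, d x y = 0 ↔ x = y) (hsymm : ∀ x y, d x y = d y x)
    (hultra : ∀ x y z, d x z ≤ max (d x y) (d y z)) (x y : X) : 0 ≤ d x y := by
  have h := hultra x y x
  rw [d_self hd0, hsymm y x, max_self] at h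
  linarith [le_max_left (d x y) (d x y)]

lemma isosceles (hsymm : ∀ x y, d x y = d y x)
    (hultra : ∀ x y z, d x z ≤ max (d x y) (d y z)) {x y z : X}
    (h : d x y < d x z) : d y z = d x z := by
  have h1 : d y z ≤ d x z := by
    have := hultra y x z
    rw [hsymm y x] at this
    exact this.trans (max_le h.le le_rfl)
  rcases h1.lt_or_eq with h2 | h2
  · exfalso
    have h3 := hultra x y z
    have : max (d x y) (d y z) < d x z := max_lt h h2
    linarith
  · exact h2

lemma mem_uball_self (hd0 : ∀ x y, d x y = 0 ↔ x = y) {x : X} {r : ℝ} (hr : 0 ≤ r) :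
    x ∈ uball d x r := mem_uball.2 (by rw [d_self hd0]; exact hr)

lemma uball_recenter (hsymm : ∀ x y, d x y = d y x)
    (hultra : ∀ x y z, d x z ≤ max (d x y) (d y z)) {x y : X} {r : ℝ}
    (h : y ∈ uball d x r) : uball d y r = uball d x r := by
  rw [mem_uball] at h
  ext z
  simp only [mem_uball]
  constructor
  · intro hz
    exact (hultra x y z).trans (max_le h hz)
  · intro hz
    have := hultra y x z
    rw [hsymm y x] at this
    exact this.trans (max_le h hz)

lemma le_fdiam {B : Finset X} {p q : X} (hp : p ∈ B) (hq : q ∈ B) : d p q ≤ fdiam d B := by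
  have hmem : (p, q) ∈ B ×ˢ B := by rw [mem_product]; exact ⟨hp, hq⟩
  have hne : (B ×ˢ B).Nonempty := ⟨(p, q), hmem⟩
  rw [fdiam, dif_pos hne]
  exact le_sup' (f := fun p : X × X => d p.1 p.2) hmem

lemma fdiam_nonneg (hd0 : ∀ x y, d x y = 0 ↔ x = y) {B : Finset X} {x : X} (hx : x ∈ B) :
    0 ≤ fdiam d B := by
  have h : d x x ≤ fdiam d B := le_fdiam (d := d) hx hx
  rw [d_self hd0] at h; exact h

lemma fdiam_exists (hd0 : ∀ x y, d x y = 0 ↔ x = y) (hsymm : ∀ x y, d x y = d y x)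
    (hultra : ∀ x y z, d x z ≤ max (d x y) (d y z)) {B : Finset X} {x : X} (hx : x ∈ B) :
    ∃ y ∈ B, d x y = fdiam d B := by
  have hne : (B ×ˢ B).Nonempty := ⟨(x, x), mem_product.2 ⟨hx, hx⟩⟩
  obtain ⟨⟨p, q⟩, hpq, hval⟩ := Finset.exists_mem_eq_sup' hne fun p : X × X => d p.1 p.2
  rw [mem_product] at hpq
  have hval' : fdiam d B = d p q := by rw [fdiam, dif_pos hne]; exact hval
  rcases le_or_gt (fdiam d B) (d x q) with h | h
  · exact ⟨q, hpq.2, le_antisymm (le_fdiam (d := d) hx hpq.2) h⟩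
  · refine ⟨p, hpq.1, le_antisymm (le_fdiam (d := d) hx hpq.1) ?_⟩
    have hd : d p q ≤ max (d p x) (d x q) := hultra p x q
    have hle : d p q ≤ d p x := by
      rcases le_total (d x q) (d p x) with he | he
      · exact hd.trans (max_le le_rfl he |>.trans le_rfl) |>.trans le_rfl
      · rcases lt_or_ge (d p x) (d x q) with h2 | h2
        · exfalso
          have : d p q ≤ d x q := hd.trans (max_le h2.le le_rfl)
          rw [← hval'] at this; linarith
        · exact hd.trans (max_le le_rfl h2)
    rw [hsymm p x] at hle
    rw [hval']; exact hle

lemma ball_eq_uball_fdiam (hd0 : ∀ x y, d x y = 0 ↔ x = y) (hsymm : ∀ x y, d x y = d y x)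
    (hultra : ∀ x y z, d x z ≤ max (d x y) (d y z)) {B : Finset X} {x : X}
    (hB : IsBall d B) (hx : x ∈ B) : B = uball d x (fdiam d B) := by
  obtain ⟨c, r, hr, rfl⟩ := hB
  set B := uball d c r with hBdef
  ext y
  constructor
  · intro hy
    exact mem_uball.2 (le_fdiam (d := d) hx hy)
  · intro hy'
    have hy : d x y ≤ fdiam d B := mem_uball.1 hy'
    have hfr : fdiam d B ≤ r := by
      have hne : (B ×ˢ B).Nonempty := ⟨(x, x), mem_product.2 ⟨hx, hx⟩⟩
      rw [fdiam, dif_pos hne]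
      refine Finset.sup'_le _ _ fun p hp => ?_
      rw [mem_product] at hp
      have h1 : d p.1 c ≤ r := by rw [hsymm]; exact mem_uball.1 hp.1
      have h2 : d c p.2 ≤ r := mem_uball.1 hp.2
      exact (hultra p.1 c p.2).trans (max_le h1 h2)
    have hcx : d c x ≤ r := mem_uball.1 hx
    have h5 : d c y ≤ max (d c x) (d x y) := hultra c x y
    exact mem_uball.2 (h5.trans (max_le hcx (hy.trans hfr)))

end Aux

section Parent
variable {X : Type*} [Fintype X] [DecidableEq X] {d : X → X → ℝ} {B : Finset X} {i : X}
set_option linter.unusedVariables false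

lemma compl_nonempty (hBu : B ≠ univ) : (Bᶜ : Finset X).Nonempty := by
  rw [Finset.nonempty_iff_ne_empty, Ne, Finset.compl_eq_empty_iff]
  exact hBu

lemma parentR_eq (hBu : B ≠ univ) :
    parentR d B i = Bᶜ.inf' (compl_nonempty hBu) fun y => d i y := by
  rw [parentR, dif_pos (compl_nonempty hBu)]

lemma fdiam_lt_parentR (hd0 : ∀ x y, d x y = 0 ↔ x = y) (hsymm : ∀ x y, d x y = d y x)
    (hultra : ∀ x y z, d x z ≤ max (d x y) (d y z))
    (hB : IsBall d B) (hi : i ∈ B) (hBu : B ≠ univ) :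
    fdiam d B < parentR d B i := by
  rw [parentR_eq hBu, Finset.lt_inf'_iff]
  intro y hy
  rw [Finset.mem_compl] at hy
  by_contra h
  push_neg at h
  exact hy ((ball_eq_uball_fdiam hd0 hsymm hultra hB hi) ▸ mem_uball.2 h)

lemma dist_out (hd0 : ∀ x y, d x y = 0 ↔ x = y) (hsymm : ∀ x y, d x y = d y x)
    (hultra : ∀ x y z, d x z ≤ max (d x y) (d y z))
    (hB : IsBall d B) (hi : i ∈ B) {p y : X} (hp : p ∈ B) (hy : y ∉ B) :
    d p y = d i y := by
  have h1 : d i p ≤ fdiam d B := le_fdiam (d := d) hi hp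
  have h2 : fdiam d B < d i y := by
    by_contra h
    push_neg at h
    exact hy ((ball_eq_uball_fdiam hd0 hsymm hultra hB hi) ▸ mem_uball.2 h)
  exact isosceles hsymm hultra (lt_of_le_of_lt h1 h2)

lemma parentR_le_d_out (hBu : B ≠ univ) {y : X} (hy : y ∉ B) : parentR d B i ≤ d i y := by
  rw [parentR_eq hBu]
  exact Finset.inf'_le _ (Finset.mem_compl.2 hy)

lemma exists_parent_witness (hBu : B ≠ univ) :
    ∃ y₀, y₀ ∉ B ∧ d i y₀ = parentR d B i := by
  obtain ⟨y₀, hy₀, hval⟩ := Finset.exists_mem_eq_inf' (compl_nonempty hBu) fun y => d i y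
  exact ⟨y₀, Finset.mem_compl.1 hy₀, ((parentR_eq hBu) ▸ hval).symm⟩

lemma parentR_nonneg (hd0 : ∀ x y, d x y = 0 ↔ x = y) (hsymm : ∀ x y, d x y = d y x)
    (hultra : ∀ x y z, d x z ≤ max (d x y) (d y z))
    (hB : IsBall d B) (hi : i ∈ B) (hBu : B ≠ univ) : 0 ≤ parentR d B i :=
  (fdiam_nonneg hd0 hi).trans (fdiam_lt_parentR hd0 hsymm hultra hB hi hBu).le

lemma mem_parentB_iff {y : X} : y ∈ parentB d B i ↔ d i y ≤ parentR d B i := mem_uball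

lemma mem_parentB_self (hd0 : ∀ x y, d x y = 0 ↔ x = y) (hsymm : ∀ x y, d x y = d y x)
    (hultra : ∀ x y z, d x z ≤ max (d x y) (d y z))
    (hB : IsBall d B) (hi : i ∈ B) (hBu : B ≠ univ) : i ∈ parentB d B i :=
  mem_parentB_iff.2 (by rw [d_self hd0]; exact parentR_nonneg hd0 hsymm hultra hB hi hBu)

lemma isBall_parentB (hd0 : ∀ x y, d x y = 0 ↔ x = y) (hsymm : ∀ x y, d x y = d y x)
    (hultra : ∀ x y z, d x z ≤ max (d x y) (d y z))
    (hB : IsBall d B) (hi : i ∈ B) (hBu : B ≠ univ) : IsBall d (parentB d B i) :=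
  ⟨i, parentR d B i, parentR_nonneg hd0 hsymm hultra hB hi hBu, rfl⟩

lemma subset_parentB (hd0 : ∀ x y, d x y = 0 ↔ x = y) (hsymm : ∀ x y, d x y = d y x)
    (hultra : ∀ x y z, d x z ≤ max (d x y) (d y z))
    (hB : IsBall d B) (hi : i ∈ B) (hBu : B ≠ univ) : B ⊆ parentB d B i := by
  intro y hy
  exact mem_parentB_iff.2
    ((le_fdiam (d := d) hi hy).trans (fdiam_lt_parentR hd0 hsymm hultra hB hi hBu).le)

lemma parentB_ne (hd0 : ∀ x y, d x y = 0 ↔ x = y) (hsymm : ∀ x y, d x y = d y x)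
    (hultra : ∀ x y z, d x z ≤ max (d x y) (d y z))
    (hB : IsBall d B) (hi : i ∈ B) (hBu : B ≠ univ) : B ≠ parentB d B i := by
  obtain ⟨y₀, hy₀, hval⟩ := exists_parent_witness (i := i) hBu
  intro h
  exact hy₀ (h ▸ mem_parentB_iff.2 hval.le)

lemma fdiam_parentB (hd0 : ∀ x y, d x y = 0 ↔ x = y) (hsymm : ∀ x y, d x y = d y x)
    (hultra : ∀ x y z, d x z ≤ max (d x y) (d y z))
    (hB : IsBall d B) (hi : i ∈ B) (hBu : B ≠ univ) :
    fdiam d (parentB d B i) = parentR d B i := by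
  obtain ⟨y₀, hy₀, hval⟩ := exists_parent_witness (i := i) hBu
  have hiP : i ∈ parentB d B i := mem_parentB_self hd0 hsymm hultra hB hi hBu
  have hy₀P : y₀ ∈ parentB d B i := mem_parentB_iff.2 hval.le
  refine le_antisymm ?_ (hval ▸ le_fdiam (d := d) hiP hy₀P)
  have hne : (parentB d B i ×ˢ parentB d B i).Nonempty := ⟨(i, i), by
    rw [mem_product]; exact ⟨hiP, hiP⟩⟩
  rw [fdiam, dif_pos hne]
  refine Finset.sup'_le _ _ fun p hp => ?_
  rw [mem_product] at hp
  have h1 : d p.1 i ≤ parentR d B i := by rw [hsymm]; exact mem_parentB_iff.1 hp.1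
  have h2 : d i p.2 ≤ parentR d B i := mem_parentB_iff.1 hp.2
  exact (hultra p.1 i p.2).trans (max_le h1 h2)

lemma dist_cross (hd0 : ∀ x y, d x y = 0 ↔ x = y) (hsymm : ∀ x y, d x y = d y x)
    (hultra : ∀ x y z, d x z ≤ max (d x y) (d y z))
    (hB : IsBall d B) (hi : i ∈ B) (hBu : B ≠ univ) {p q : X}
    (hp : p ∈ B) (hq1 : q ∈ parentB d B i) (hq2 : q ∉ B) :
    d p q = parentR d B i := by
  rw [dist_out hd0 hsymm hultra hB hi hp hq2]
  exact le_antisymm (mem_parentB_iff.1 hq1) (parentR_le_d_out hBu hq2)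

lemma balls_comparable (hd0 : ∀ x y, d x y = 0 ↔ x = y) (hsymm : ∀ x y, d x y = d y x)
    (hultra : ∀ x y z, d x z ≤ max (d x y) (d y z)) {B₁ B₂ : Finset X}
    (hB₁ : IsBall d B₁) (h1 : i ∈ B₁) (hB₂ : IsBall d B₂) (h2 : i ∈ B₂) :
    B₁ ⊆ B₂ ∨ B₂ ⊆ B₁ := by
  rcases le_total (fdiam d B₁) (fdiam d B₂) with h | h
  · left
    intro y hy
    rw [ball_eq_uball_fdiam hd0 hsymm hultra hB₁ h1] at hy
    rw [ball_eq_uball_fdiam hd0 hsymm hultra hB₂ h2]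
    exact mem_uball.2 ((mem_uball.1 hy).trans h)
  · right
    intro y hy
    rw [ball_eq_uball_fdiam hd0 hsymm hultra hB₂ h2] at hy
    rw [ball_eq_uball_fdiam hd0 hsymm hultra hB₁ h1]
    exact mem_uball.2 ((mem_uball.1 hy).trans h)

lemma parent_min (hd0 : ∀ x y, d x y = 0 ↔ x = y) (hsymm : ∀ x y, d x y = d y x)
    (hultra : ∀ x y z, d x z ≤ max (d x y) (d y z)) {T : Finset X}
    (hB : IsBall d B) (hi : i ∈ B) (hBu : B ≠ univ)
    (hT : IsBall d T) (hiT : i ∈ T) (hsub : B ⊆ T) (hne : B ≠ T) :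
    parentB d B i ⊆ T := by
  obtain ⟨q, hqT, hqB⟩ : ∃ q, q ∈ T ∧ q ∉ B := by
    by_contra h
    push_neg at h
    exact hne (Finset.Subset.antisymm hsub fun y hy => by
      by_contra hc
      exact hc (absurd (h y hy) (by simp_all)))
  have hq : parentR d B i ≤ d i q := parentR_le_d_out hBu hqB
  have hqf : d i q ≤ fdiam d T := le_fdiam (d := d) hiT hqT
  intro y hy
  rw [ball_eq_uball_fdiam hd0 hsymm hultra hT hiT]
  exact mem_uball.2 ((mem_parentB_iff.1 hy).trans (hq.trans hqf))

end Parent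




section Eigen
variable {X : Type*} [Fintype X] [DecidableEq X] {d : X → X → ℝ}

lemma mulVec_ultraLap (d : X → X → ℝ) (k : ℝ → ℝ) (m : X → ℝ) (f : X → ℝ) (x : X) :
    (ultraLap d k m).mulVec f x = ∑ y, k (d x y) * m y * (f y - f x) := by
  have hL : (ultraLap d k m).mulVec f x
      = ∑ y, (if y = x then -(∑ z ∈ ({x}ᶜ : Finset X), k (d x z) * m z)
          else k (d x y) * m y) * f y := rfl
  have h1 : ∀ g : X → ℝ, ∑ y, g y = (∑ y ∈ ({x}ᶜ : Finset X), g y) + g x := by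
    intro g
    rw [← Finset.sum_compl_add_sum ({x} : Finset X) g, Finset.sum_singleton]
  rw [hL, h1, h1 fun y => k (d x y) * m y * (f y - f x)]
  rw [if_pos rfl]
  have h2 : ∑ y ∈ ({x}ᶜ : Finset X),
      (if y = x then -(∑ z ∈ ({x}ᶜ : Finset X), k (d x z) * m z)
        else k (d x y) * m y) * f y
      = ∑ y ∈ ({x}ᶜ : Finset X), k (d x y) * m y * f y := by
    refine Finset.sum_congr rfl fun y hy => ?_
    rw [Finset.mem_compl, Finset.mem_singleton] at hy
    rw [if_neg hy]
  rw [h2]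
  have h3 : ∑ y ∈ ({x}ᶜ : Finset X), k (d x y) * m y * (f y - f x)
      = (∑ y ∈ ({x}ᶜ : Finset X), k (d x y) * m y * f y)
        - (∑ y ∈ ({x}ᶜ : Finset X), k (d x y) * m y) * f x := by
    rw [Finset.sum_mul, ← Finset.sum_sub_distrib]
    exact Finset.sum_congr rfl fun y _ => by ring
  rw [h3]
  ring

lemma ultraLap_eigen (hd0 : ∀ x y, d x y = 0 ↔ x = y) (hsymm : ∀ x y, d x y = d y x)
    (hultra : ∀ x y z, d x z ≤ max (d x y) (d y z)) (k : ℝ → ℝ) {m : X → ℝ}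
    (hm : ∀ x, 0 < m x) {B : Finset X} {i : X}
    (hB : IsBall d B) (hi : i ∈ B) (hBu : B ≠ univ) :
    (ultraLap d k m).mulVec
      (fun x => (if x ∈ B then (mass m B)⁻¹ else 0)
        - (if x ∈ parentB d B i then (mass m (parentB d B i))⁻¹ else 0))
      = lamB d k m (parentB d B i) i •
        (fun x => (if x ∈ B then (mass m B)⁻¹ else 0)
          - (if x ∈ parentB d B i then (mass m (parentB d B i))⁻¹ else 0)) := by
  set P := parentB d B i with hPdef
  set R := parentR d B i with hRdef
  have hsub : B ⊆ P := subset_parentB hd0 hsymm hultra hB hi hBu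
  have hiP : i ∈ P := hsub hi
  have hPball : IsBall d P := isBall_parentB hd0 hsymm hultra hB hi hBu
  have hfd : fdiam d P = R := fdiam_parentB hd0 hsymm hultra hB hi hBu
  have hMB : (0:ℝ) < mass m B := Finset.sum_pos (fun y _ => hm y) ⟨i, hi⟩
  have hMP : (0:ℝ) < mass m P := Finset.sum_pos (fun y _ => hm y) ⟨i, hiP⟩
  set a := (mass m B)⁻¹ with ha
  set b := (mass m P)⁻¹ with hb
  set S := ∑ y ∈ (Pᶜ : Finset X), k (d i y) * m y with hS
  have hlam : lamB d k m P i = -(S + k R * mass m P) := by rw [lamB, hfd]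
  have hmsd : ∑ y ∈ P \ B, m y = mass m P - mass m B := by
    rw [mass, mass, ← Finset.sum_sdiff hsub]; ring
  funext x
  rw [mulVec_ultraLap, Pi.smul_apply, smul_eq_mul]
  have hsplit : ∀ F : X → ℝ,
      ∑ y, F y = ((∑ y ∈ B, F y) + ∑ y ∈ P \ B, F y) + ∑ y ∈ (Pᶜ : Finset X), F y := by
    intro F
    rw [← Finset.sum_compl_add_sum P F, ← Finset.sum_sdiff hsub]
    ring
  rw [hsplit]
  by_cases hxB : x ∈ B
  · have hxP : x ∈ P := hsub hxB
    rw [if_pos hxB, if_pos hxP]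
    have e1 : ∑ y ∈ B, k (d x y) * m y *
        (((if y ∈ B then a else 0) - (if y ∈ P then b else 0)) - (a - b)) = 0 := by
      refine Finset.sum_eq_zero fun y hy => ?_
      rw [if_pos hy, if_pos (hsub hy)]; ring
    have e2 : ∑ y ∈ P \ B, k (d x y) * m y *
        (((if y ∈ B then a else 0) - (if y ∈ P then b else 0)) - (a - b))
        = k R * (-a) * (mass m P - mass m B) := by
      rw [← hmsd, Finset.mul_sum]
      refine Finset.sum_congr rfl fun y hy => ?_
      rw [Finset.mem_sdiff] at hy
      rw [if_neg hy.2, if_pos hy.1, dist_cross hd0 hsymm hultra hB hi hBu hxB hy.1 hy.2]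
      ring
    have e3 : ∑ y ∈ (Pᶜ : Finset X), k (d x y) * m y *
        (((if y ∈ B then a else 0) - (if y ∈ P then b else 0)) - (a - b))
        = S * (-(a - b)) := by
      rw [hS, Finset.sum_mul]
      refine Finset.sum_congr rfl fun y hy => ?_
      rw [Finset.mem_compl] at hy
      rw [if_neg fun hc => hy (hsub hc), if_neg hy,
        dist_out hd0 hsymm hultra hPball hiP hxP hy]
      ring
    rw [e1, e2, e3, hlam, ha, hb]
    field_simp
    ring
  · by_cases hxP : x ∈ P
    · rw [if_neg hxB, if_pos hxP]
      have e1 : ∑ y ∈ B, k (d x y) * m y *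
          (((if y ∈ B then a else 0) - (if y ∈ P then b else 0)) - (0 - b))
          = k R * a * mass m B := by
        rw [mass, Finset.mul_sum]
        refine Finset.sum_congr rfl fun y hy => ?_
        rw [if_pos hy, if_pos (hsub hy), hsymm x y,
          dist_cross hd0 hsymm hultra hB hi hBu hy hxP hxB]
        ring
      have e2 : ∑ y ∈ P \ B, k (d x y) * m y *
          (((if y ∈ B then a else 0) - (if y ∈ P then b else 0)) - (0 - b)) = 0 := by
        refine Finset.sum_eq_zero fun y hy => ?_
        rw [Finset.mem_sdiff] at hy
        rw [if_neg hy.2, if_pos hy.1]; ring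
      have e3 : ∑ y ∈ (Pᶜ : Finset X), k (d x y) * m y *
          (((if y ∈ B then a else 0) - (if y ∈ P then b else 0)) - (0 - b))
          = S * b := by
        rw [hS, Finset.sum_mul]
        refine Finset.sum_congr rfl fun y hy => ?_
        rw [Finset.mem_compl] at hy
        rw [if_neg fun hc => hy (hsub hc), if_neg hy,
          dist_out hd0 hsymm hultra hPball hiP hxP hy]
        ring
      rw [e1, e2, e3, hlam, ha, hb]
      field_simp
      ring
    · rw [if_neg hxB, if_neg hxP]
      have hdx : ∀ y ∈ P, d x y = d i x := by
        intro y hy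
        rw [hsymm x y, dist_out hd0 hsymm hultra hPball hiP hy hxP, hsymm i x, hsymm x i]
      have e1 : ∑ y ∈ B, k (d x y) * m y *
          (((if y ∈ B then a else 0) - (if y ∈ P then b else 0)) - (0 - 0))
          = k (d i x) * (a - b) * mass m B := by
        rw [mass, Finset.mul_sum]
        refine Finset.sum_congr rfl fun y hy => ?_
        rw [if_pos hy, if_pos (hsub hy), hdx y (hsub hy)]
        ring
      have e2 : ∑ y ∈ P \ B, k (d x y) * m y *
          (((if y ∈ B then a else 0) - (if y ∈ P then b else 0)) - (0 - 0))
          = k (d i x) * (-b) * (mass m P - mass m B) := by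
        rw [← hmsd, Finset.mul_sum]
        refine Finset.sum_congr rfl fun y hy => ?_
        rw [Finset.mem_sdiff] at hy
        rw [if_neg hy.2, if_pos hy.1, hdx y hy.1]
        ring
      have e3 : ∑ y ∈ (Pᶜ : Finset X), k (d x y) * m y *
          (((if y ∈ B then a else 0) - (if y ∈ P then b else 0)) - (0 - 0)) = 0 := by
        refine Finset.sum_eq_zero fun y hy => ?_
        rw [Finset.mem_compl] at hy
        rw [if_neg fun hc => hy (hsub hc), if_neg hy]
        ring
      rw [e1, e2, e3, ha, hb]
      field_simp
      ring

lemma ultraLap_const (d : X → X → ℝ) (k : ℝ → ℝ) (m : X → ℝ) (c : ℝ) :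
    (ultraLap d k m).mulVec (fun _ => c) = (0:ℝ) • (fun _ : X => c) := by
  funext x
  rw [mulVec_ultraLap, Pi.smul_apply, smul_eq_mul]
  simp

end Eigen


section More
variable {X : Type*} [Fintype X] [DecidableEq X] {d : X → X → ℝ} {i : X}
set_option linter.unusedVariables false

lemma fdiam_le_univ {B : Finset X} {x : X} (hx : x ∈ B) : fdiam d B ≤ fdiam d (univ : Finset X) := by
  have hne : (B ×ˢ B).Nonempty := ⟨(x, x), by rw [mem_product]; exact ⟨hx, hx⟩⟩
  rw [fdiam, dif_pos hne]
  exact Finset.sup'_le _ _ fun p _ => le_fdiam (d := d) (mem_univ p.1) (mem_univ p.2)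

lemma mass_pos {m : X → ℝ} (hm : ∀ x, 0 < m x) {B : Finset X} {x : X} (hx : x ∈ B) :
    0 < mass m B := Finset.sum_pos (fun y _ => hm y) ⟨x, hx⟩

lemma lamB_neg (hd0 : ∀ x y, d x y = 0 ↔ x = y) (hsymm : ∀ x y, d x y = d y x)
    (hultra : ∀ x y z, d x z ≤ max (d x y) (d y z)) {k : ℝ → ℝ} {m : X → ℝ}
    (hm : ∀ x, 0 < m x) (hk : ∀ a b, 0 ≤ a → a ≤ b → k b ≤ k a)
    (hgap : 0 < k (fdiam d (univ : Finset X)))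
    {B' : Finset X} {x₀ : X} (hx : x₀ ∈ B') : lamB d k m B' x₀ < 0 := by
  have hkpos : ∀ r : ℝ, 0 ≤ r → r ≤ fdiam d (univ : Finset X) → 0 < k r :=
    fun r h1 h2 => lt_of_lt_of_le hgap (hk r _ h1 h2)
  have hS : 0 ≤ ∑ y ∈ B'ᶜ, k (d x₀ y) * m y := by
    refine Finset.sum_nonneg fun y _ => mul_nonneg ?_ (hm y).le
    exact (hkpos _ (d_nonneg hd0 hsymm hultra _ _)
      (le_fdiam (d := d) (mem_univ x₀) (mem_univ y))).le
  have hk2 : 0 < k (fdiam d B') * mass m B' :=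
    mul_pos (hkpos _ (fdiam_nonneg hd0 hx) (fdiam_le_univ hx)) (mass_pos hm hx)
  rw [lamB]
  linarith

lemma isBall_singleton (hd0 : ∀ x y, d x y = 0 ↔ x = y) (hsymm : ∀ x y, d x y = d y x)
    (hultra : ∀ x y z, d x z ≤ max (d x y) (d y z)) (i : X) :
    IsBall d ({i} : Finset X) := by
  refine ⟨i, 0, le_rfl, ?_⟩
  ext y
  rw [Finset.mem_singleton, mem_uball]
  constructor
  · rintro rfl; rw [d_self hd0]
  · intro h
    have := le_antisymm h (d_nonneg hd0 hsymm hultra i y)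
    exact ((hd0 i y).1 this).symm

lemma isBall_univ (hd0 : ∀ x y, d x y = 0 ↔ x = y) (i : X) :
    IsBall d (univ : Finset X) := by
  refine ⟨i, fdiam d (univ : Finset X), fdiam_nonneg hd0 (mem_univ i), ?_⟩
  ext y
  simp only [mem_univ, true_iff, mem_uball]
  exact le_fdiam (d := d) (mem_univ i) (mem_univ y)

lemma parentB_singleton (h : (({i}ᶜ : Finset X)).Nonempty) :
    parentB d ({i} : Finset X) i = sball d i i := by
  rw [sball, if_pos rfl, dif_pos h, parentB, parentR, dif_pos h]

lemma singleton_ne_univ (h : (({i}ᶜ : Finset X)).Nonempty) : ({i} : Finset X) ≠ univ := by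
  intro hc
  rw [hc, Finset.compl_univ] at h
  exact Finset.not_nonempty_empty h

lemma sball_subset (hd0 : ∀ x y, d x y = 0 ↔ x = y) (hsymm : ∀ x y, d x y = d y x)
    (hultra : ∀ x y z, d x z ≤ max (d x y) (d y z)) (h : (({i}ᶜ : Finset X)).Nonempty)
    {T : Finset X} (hT : IsBall d T) (hiT : i ∈ T) (hTne : T ≠ {i}) :
    sball d i i ⊆ T := by
  rw [← parentB_singleton h]
  exact parent_min hd0 hsymm hultra (isBall_singleton hd0 hsymm hultra i)
    (Finset.mem_singleton_self i) (singleton_ne_univ h) hT hiT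
    (Finset.singleton_subset_iff.2 hiT) (fun hc => hTne hc.symm)

lemma exists_child (hd0 : ∀ x y, d x y = 0 ↔ x = y) (hsymm : ∀ x y, d x y = d y x)
    (hultra : ∀ x y z, d x z ≤ max (d x y) (d y z)) {B : Finset X}
    (hB : IsBall d B) (hi : i ∈ B) (hne : B ≠ {i}) :
    ∃ T : Finset X, IsBall d T ∧ i ∈ T ∧ T ≠ univ ∧ parentB d T i = B := by
  obtain ⟨p, hpB, hpi⟩ : ∃ p ∈ B, p ≠ i := by
    by_contra h
    push_neg at h
    refine hne (Finset.Subset.antisymm (fun y hy => ?_) (Finset.singleton_subset_iff.2 hi))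
    rw [Finset.mem_singleton]
    by_contra hc
    exact hc (h y hy)
  have hdip : 0 < d i p := by
    rcases (d_nonneg hd0 hsymm hultra i p).lt_or_eq with h | h
    · exact h
    · exact absurd ((hd0 i p).1 h.symm).symm hpi
  have hfdpos : 0 < fdiam d B := lt_of_lt_of_le hdip (le_fdiam (d := d) hi hpB)
  set F := univ.filter (fun y => d i y < fdiam d B) with hF
  have hiF : i ∈ F := by
    rw [hF, Finset.mem_filter]
    exact ⟨mem_univ i, by rw [d_self hd0]; exact hfdpos⟩
  have hFne : F.Nonempty := ⟨i, hiF⟩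
  set s := F.sup' hFne (fun y => d i y) with hs
  obtain ⟨ys, hysF, hyss⟩ := Finset.exists_mem_eq_sup' hFne (fun y => d i y)
  have hslt : s < fdiam d B := by
    rw [hs, hyss]
    exact (Finset.mem_filter.1 hysF).2
  have hs0 : 0 ≤ s := by
    have h := Finset.le_sup' (fun y => d i y) hiF
    rw [d_self hd0] at h
    exact h
  obtain ⟨ystar, hystarB, hystar⟩ := fdiam_exists hd0 hsymm hultra hi
  have hystarT : ystar ∉ uball d i s := by
    rw [mem_uball, hystar]
    push_neg
    exact hslt
  have hTu : uball d i s ≠ univ := fun h => hystarT (h ▸ mem_univ ystar)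
  refine ⟨uball d i s, ⟨i, s, hs0, rfl⟩, mem_uball_self hd0 hs0, hTu, ?_⟩
  have hRf : parentR d (uball d i s) i = fdiam d B := by
    rw [parentR_eq hTu]
    apply le_antisymm
    · have h := Finset.inf'_le (fun y => d i y) (Finset.mem_compl.2 hystarT)
      rw [hystar] at h
      exact h
    · rw [Finset.le_inf'_iff]
      intro y hy
      rw [Finset.mem_compl, mem_uball] at hy
      push_neg at hy
      by_contra hc
      push_neg at hc
      have hyF : y ∈ F := by
        rw [hF, Finset.mem_filter]
        exact ⟨mem_univ y, hc⟩
      exact absurd (Finset.le_sup' (fun y => d i y) hyF) (by rw [← hs]; push_neg; exact hy)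
  rw [parentB, hRf, ← ball_eq_uball_fdiam hd0 hsymm hultra hB hi]

end More


/-- Closed form for the relaxation time entering the CTMC
centrality: `∫₀^∞ (H_t(i,i) − 1) dt` converges and equals
`−(1/λ(B₀))(1/m(i) − 1/m(B₀)) + Σ_{B₀ ⊆ T ⊊ X} (−1/λ(T⁺))(1/m(T) − 1/m(T⁺))`,
where `B₀` is the smallest ball containing `i` with at least two elements. -/
theorem stmt18 {X : Type*} [Fintype X] [DecidableEq X]
    (hX : 1 < Fintype.card X)
    (d : X → X → ℝ)
    (hd0 : ∀ x y, d x y = 0 ↔ x = y)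
    (hsymm : ∀ x y, d x y = d y x)
    (hultra : ∀ x y z, d x z ≤ max (d x y) (d y z))
    (m : X → ℝ) (hm : ∀ x, 0 < m x) (k : ℝ → ℝ)
    (hk : ∀ a b, 0 ≤ a → a ≤ b → k b ≤ k a)
    (hgap : 0 < k (fdiam d Finset.univ))
    (hprob : ∑ x, m x = 1)
    (i : X) :
    MeasureTheory.IntegrableOn
      (fun t : ℝ => (NormedSpace.exp (t • ultraLap d k m)) i i / m i - 1)
      (Set.Ioi 0) ∧
    (∫ t in Set.Ioi (0 : ℝ),
        ((NormedSpace.exp (t • ultraLap d k m)) i i / m i - 1)) =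
      -(lamB d k m (sball d i i) i)⁻¹ * ((m i)⁻¹ - (mass m (sball d i i))⁻¹) +
      ∑ T ∈ Finset.univ.filter
          (fun T : Finset X => IsBall d T ∧ sball d i i ⊆ T ∧ T ≠ Finset.univ),
        (-(lamB d k m (parentB d T i) i)⁻¹) *
          ((mass m T)⁻¹ - (mass m (parentB d T i))⁻¹) := by
  
  classical
  have hcne : (({i}ᶜ : Finset X)).Nonempty := by
    obtain ⟨j, hj⟩ := Fintype.exists_ne_of_one_lt_card hX i
    exact ⟨j, Finset.mem_compl.2 (by simp [hj])⟩
  have hiu : ({i} : Finset X) ≠ univ := singleton_ne_univ hcne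
  have hsball : IsBall d ({i} : Finset X) := isBall_singleton hd0 hsymm hultra i
  have hsi : i ∈ ({i} : Finset X) := Finset.mem_singleton_self i
  have hPB0 : parentB d ({i} : Finset X) i = sball d i i := parentB_singleton hcne
  have hB₀ball : IsBall d (sball d i i) :=
    hPB0 ▸ isBall_parentB hd0 hsymm hultra hsball hsi hiu
  have hiB₀ : i ∈ sball d i i := hPB0 ▸ mem_parentB_self hd0 hsymm hultra hsball hsi hiu
  obtain ⟨j, hjni, hjval⟩ := exists_parent_witness (d := d) (B := ({i} : Finset X)) (i := i) hiu
  have hjB₀ : j ∈ sball d i i := hPB0 ▸ mem_parentB_iff.2 hjval.le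
  have hjne : j ≠ i := by simpa using hjni
  set 𝒮 := Finset.univ.filter
    (fun T : Finset X => IsBall d T ∧ sball d i i ⊆ T ∧ T ≠ Finset.univ) with h𝒮
  set 𝒯 := Finset.univ.filter
    (fun T : Finset X => IsBall d T ∧ i ∈ T ∧ T ≠ Finset.univ) with h𝒯
  set 𝒯' := Finset.univ.filter
    (fun T : Finset X => IsBall d T ∧ i ∈ T ∧ T ≠ ({i} : Finset X)) with h𝒯'
  have hT_eq : 𝒯 = insert ({i} : Finset X) 𝒮 := by
    ext T
    simp only [h𝒯, h𝒮, Finset.mem_insert, Finset.mem_filter, Finset.mem_univ, true_and]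
    constructor
    · rintro ⟨hb, hiT, hu⟩
      by_cases h : T = ({i} : Finset X)
      · exact Or.inl h
      · exact Or.inr ⟨hb, sball_subset hd0 hsymm hultra hcne hb hiT h, hu⟩
    · rintro (rfl | ⟨hb, hsub, hu⟩)
      · exact ⟨hsball, hsi, hiu⟩
      · exact ⟨hb, hsub hiB₀, hu⟩
  have hinotS : ({i} : Finset X) ∉ 𝒮 := by
    simp only [h𝒮, Finset.mem_filter, Finset.mem_univ, true_and]
    rintro ⟨-, hsub, -⟩
    exact hjne (by simpa using hsub hjB₀)
  have hT'_eq : 𝒯' = insert (univ : Finset X) 𝒮 := by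
    ext T
    simp only [h𝒯', h𝒮, Finset.mem_insert, Finset.mem_filter, Finset.mem_univ, true_and]
    constructor
    · rintro ⟨hb, hiT, hne⟩
      by_cases h : T = (univ : Finset X)
      · exact Or.inl h
      · exact Or.inr ⟨hb, sball_subset hd0 hsymm hultra hcne hb hiT hne, h⟩
    · rintro (rfl | ⟨hb, hsub, hu⟩)
      · exact ⟨isBall_univ hd0 i, Finset.mem_univ i, Ne.symm hiu⟩
      · refine ⟨hb, hsub hiB₀, fun hc => ?_⟩
        rw [hc] at hsub
        exact hjne (by simpa using hsub hjB₀)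
  have hunotS : (univ : Finset X) ∉ 𝒮 := by
    simp [h𝒮]
  have hmem𝒯 : ∀ T ∈ 𝒯, IsBall d T ∧ i ∈ T ∧ T ≠ univ := by
    intro T hT
    simpa [h𝒯] using hT
  -- bijection between parent map and balls ≠ {i}
  have hbij : ∀ F : Finset X → ℝ, ∑ T ∈ 𝒯, F (parentB d T i) = ∑ T ∈ 𝒯', F T := by
    intro F
    refine Finset.sum_bij (fun T _ => parentB d T i) ?_ ?_ ?_ (fun T hT => rfl)
    · intro T hT
      obtain ⟨hb, hiT, hu⟩ := hmem𝒯 T hT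
      have h1 := isBall_parentB hd0 hsymm hultra hb hiT hu
      have h2 := mem_parentB_self hd0 hsymm hultra hb hiT hu
      refine Finset.mem_filter.2 ⟨Finset.mem_univ _, h1, h2, fun hc' => ?_⟩
      have hc : parentB d T i = ({i} : Finset X) := hc'
      have hsub : T ⊆ ({i} : Finset X) := hc ▸ subset_parentB hd0 hsymm hultra hb hiT hu
      have hTeq : T = ({i} : Finset X) :=
        Finset.Subset.antisymm hsub (Finset.singleton_subset_iff.2 hiT)
      exact (parentB_ne hd0 hsymm hultra hb hiT hu) (hTeq.trans hc.symm)
    · have haux : ∀ T₁ ∈ 𝒯, ∀ T₂ ∈ 𝒯, T₁ ⊆ T₂ →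
          parentB d T₁ i = parentB d T₂ i → T₁ = T₂ := by
        intro T₁ h₁ T₂ h₂ hsub heq
        obtain ⟨hb₁, hi₁, hu₁⟩ := hmem𝒯 T₁ h₁
        obtain ⟨hb₂, hi₂, hu₂⟩ := hmem𝒯 T₂ h₂
        by_contra hne
        have hmin : parentB d T₁ i ⊆ T₂ :=
          parent_min hd0 hsymm hultra hb₁ hi₁ hu₁ hb₂ hi₂ hsub hne
        have hsub2 : T₂ ⊆ parentB d T₂ i := subset_parentB hd0 hsymm hultra hb₂ hi₂ hu₂
        have : T₂ = parentB d T₂ i :=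
          Finset.Subset.antisymm hsub2 (heq ▸ hmin)
        exact (parentB_ne hd0 hsymm hultra hb₂ hi₂ hu₂) this
      intro T₁ h₁ T₂ h₂ heq'
      have heq : parentB d T₁ i = parentB d T₂ i := heq'
      obtain ⟨hb₁, hi₁, -⟩ := hmem𝒯 T₁ h₁
      obtain ⟨hb₂, hi₂, -⟩ := hmem𝒯 T₂ h₂
      rcases balls_comparable hd0 hsymm hultra hb₁ hi₁ hb₂ hi₂ with h | h
      · exact haux T₁ h₁ T₂ h₂ h heq
      · exact (haux T₂ h₂ T₁ h₁ h heq.symm).symm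
    · intro B hB'
      obtain ⟨hb, hiB, hne⟩ : IsBall d B ∧ i ∈ B ∧ B ≠ ({i} : Finset X) := by
        simpa [h𝒯'] using hB'
      obtain ⟨T, ht1, ht2, ht3, ht4⟩ := exists_child hd0 hsymm hultra hb hiB hne
      exact ⟨T, Finset.mem_filter.2 ⟨Finset.mem_univ _, ht1, ht2, ht3⟩, ht4⟩
  have hmassuniv : mass m (univ : Finset X) = 1 := by rw [mass]; exact hprob
  have hmi : (m i) ≠ 0 := (hm i).ne'
  -- master identity
  have master : ∀ t : ℝ, (NormedSpace.exp (t • ultraLap d k m)) i i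
      = m i * (1 + ∑ T ∈ 𝒯, Real.exp (t * lamB d k m (parentB d T i) i)
          * ((mass m T)⁻¹ - (mass m (parentB d T i))⁻¹)) := by
    intro t
    set E := NormedSpace.exp (t • ultraLap d k m) with hE
    set fT : Finset X → X → ℝ := fun T x =>
      (if x ∈ T then (mass m T)⁻¹ else 0)
        - (if x ∈ parentB d T i then (mass m (parentB d T i))⁻¹ else 0) with hfT
    have hveq : (fun x => if x ∈ ({i} : Finset X) then (mass m ({i} : Finset X))⁻¹ else (0:ℝ))
        = (∑ T ∈ 𝒯, fT T) + (fun _ => (1:ℝ)) := by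
      funext x
      rw [Pi.add_apply, Finset.sum_apply]
      have h1 : ∑ T ∈ 𝒯, (if x ∈ parentB d T i then (mass m (parentB d T i))⁻¹ else (0:ℝ))
          = ∑ T ∈ 𝒯', (if x ∈ T then (mass m T)⁻¹ else 0) :=
        hbij fun B => if x ∈ B then (mass m B)⁻¹ else 0
      have h2 : ∑ T ∈ 𝒯, fT T x
          = (∑ T ∈ 𝒯, (if x ∈ T then (mass m T)⁻¹ else (0:ℝ)))
            - ∑ T ∈ 𝒯', (if x ∈ T then (mass m T)⁻¹ else 0) := by
        rw [← h1, ← Finset.sum_sub_distrib]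
      rw [h2, hT_eq, hT'_eq, Finset.sum_insert hinotS, Finset.sum_insert hunotS]
      have huniv : (if x ∈ (univ : Finset X) then (mass m (univ : Finset X))⁻¹ else (0:ℝ)) = 1 := by
        rw [if_pos (Finset.mem_univ x), hmassuniv, inv_one]
      rw [huniv]
      ring
    have hfe : ∀ T ∈ 𝒯, E.mulVec (fT T)
        = Real.exp (t * lamB d k m (parentB d T i) i) • fT T := by
      intro T hT
      obtain ⟨hb, hiT, hu⟩ := hmem𝒯 T hT
      have he := ultraLap_eigen hd0 hsymm hultra k hm hb hiT hu
      have he2 : (t • ultraLap d k m).mulVec (fT T)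
          = (t * lamB d k m (parentB d T i) i) • fT T := by
        rw [hfT, Matrix.smul_mulVec, he, smul_smul]
      exact exp_mulVec_eigen _ _ _ he2
    have hconst : E.mulVec (fun _ => (1:ℝ)) = fun _ => (1:ℝ) := by
      have h0 : (t • ultraLap d k m).mulVec (fun _ => (1:ℝ))
          = (0:ℝ) • (fun _ : X => (1:ℝ)) := by
        rw [Matrix.smul_mulVec, ultraLap_const d k m 1, smul_smul, mul_zero]
      have h1 := exp_mulVec_eigen _ _ _ h0
      rwa [Real.exp_zero, one_smul] at h1
    have hmv : E.mulVec (fun x => if x ∈ ({i} : Finset X) then (mass m ({i} : Finset X))⁻¹ else (0:ℝ))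
        = (∑ T ∈ 𝒯, Real.exp (t * lamB d k m (parentB d T i) i) • fT T) + (fun _ => (1:ℝ)) := by
      rw [hveq, Matrix.mulVec_add, hconst]
      congr 1
      have hsum : E.mulVec (∑ T ∈ 𝒯, fT T) = ∑ T ∈ 𝒯, E.mulVec (fT T) :=
        map_sum E.mulVecLin fT 𝒯
      rw [hsum]
      exact Finset.sum_congr rfl hfe
    have hval := congrFun hmv i
    have hLHS : E.mulVec (fun x => if x ∈ ({i} : Finset X) then (mass m ({i} : Finset X))⁻¹ else (0:ℝ)) i
        = E i i * (m i)⁻¹ := by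
      have hmass : mass m ({i} : Finset X) = m i := by rw [mass, Finset.sum_singleton]
      rw [Matrix.mulVec]
      simp only [dotProduct, Finset.mem_singleton, hmass]
      rw [Finset.sum_eq_single i (fun y _ hy => by rw [if_neg hy, mul_zero])
        (fun h => absurd (Finset.mem_univ i) h)]
      rw [if_pos rfl]
    rw [hLHS] at hval
    rw [Pi.add_apply, Finset.sum_apply] at hval
    have htermv : ∀ T ∈ 𝒯, (Real.exp (t * lamB d k m (parentB d T i) i) • fT T) i
        = Real.exp (t * lamB d k m (parentB d T i) i)
            * ((mass m T)⁻¹ - (mass m (parentB d T i))⁻¹) := by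
      intro T hT
      obtain ⟨hb, hiT, hu⟩ := hmem𝒯 T hT
      have hiP : i ∈ parentB d T i := mem_parentB_self hd0 hsymm hultra hb hiT hu
      rw [Pi.smul_apply, smul_eq_mul, hfT]
      simp only [if_pos hiT, if_pos hiP]
    rw [Finset.sum_congr rfl htermv] at hval
    calc E i i = E i i * (m i)⁻¹ * m i := by field_simp
      _ = ((∑ T ∈ 𝒯, Real.exp (t * lamB d k m (parentB d T i) i)
            * ((mass m T)⁻¹ - (mass m (parentB d T i))⁻¹)) + 1) * m i := by rw [hval]
      _ = m i * (1 + ∑ T ∈ 𝒯, Real.exp (t * lamB d k m (parentB d T i) i)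
            * ((mass m T)⁻¹ - (mass m (parentB d T i))⁻¹)) := by ring
  -- the integrand as a finite sum of exponentials
  have hfun : (fun t : ℝ => (NormedSpace.exp (t • ultraLap d k m)) i i / m i - 1)
      = fun t => ∑ T ∈ 𝒯, ((mass m T)⁻¹ - (mass m (parentB d T i))⁻¹)
          * Real.exp (t * lamB d k m (parentB d T i) i) := by
    funext t
    rw [master t, mul_comm, mul_div_assoc, div_self hmi, mul_one, add_sub_cancel_left]
    exact Finset.sum_congr rfl fun T _ => by ring
  have hneg : ∀ T ∈ 𝒯, lamB d k m (parentB d T i) i < 0 := by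
    intro T hT
    obtain ⟨hb, hiT, hu⟩ := hmem𝒯 T hT
    exact lamB_neg hd0 hsymm hultra hm hk hgap
      (mem_parentB_self hd0 hsymm hultra hb hiT hu)
  have hint : ∀ T ∈ 𝒯, MeasureTheory.IntegrableOn
      (fun t : ℝ => ((mass m T)⁻¹ - (mass m (parentB d T i))⁻¹)
        * Real.exp (t * lamB d k m (parentB d T i) i)) (Set.Ioi 0) := by
    intro T hT
    have h1 : MeasureTheory.IntegrableOn
        (fun t : ℝ => Real.exp (-(-(lamB d k m (parentB d T i) i)) * t)) (Set.Ioi 0) :=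
      exp_neg_integrableOn_Ioi 0 (by linarith [hneg T hT])
    have h2 : (fun t : ℝ => Real.exp (-(-(lamB d k m (parentB d T i) i)) * t))
        = fun t : ℝ => Real.exp (t * lamB d k m (parentB d T i) i) := by
      funext t; ring_nf
    rw [h2] at h1
    exact h1.const_mul _
  have hIval : ∀ lam : ℝ, lam < 0 → (∫ t in Set.Ioi (0:ℝ), Real.exp (t * lam)) = -lam⁻¹ := by
    intro lam hlam
    have hlamne : lam ≠ 0 := hlam.ne
    have hder : ∀ t ∈ Set.Ioi (0:ℝ),
        HasDerivAt (fun u : ℝ => Real.exp (u * lam) / lam) (Real.exp (t * lam)) t := by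
      intro t _
      have h1 : HasDerivAt (fun u : ℝ => u * lam) lam t := hasDerivAt_mul_const lam
      have h2 := (h1.exp).div_const lam
      rw [mul_div_assoc, div_self hlamne, mul_one] at h2
      exact h2
    have hcont : ContinuousWithinAt (fun u : ℝ => Real.exp (u * lam) / lam) (Set.Ici 0) 0 := by
      exact ((Real.continuous_exp.comp ((continuous_id.mul continuous_const))).div_const
        lam).continuousWithinAt
    have htend : Filter.Tendsto (fun u : ℝ => Real.exp (u * lam) / lam)
        Filter.atTop (nhds 0) := by
      have h1 : Filter.Tendsto (fun u : ℝ => u * lam) Filter.atTop Filter.atBot :=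
        (Filter.tendsto_mul_const_atBot_of_neg hlam).2 Filter.tendsto_id
      have h2 := Real.tendsto_exp_atBot.comp h1
      have h3 := h2.div_const lam
      simpa using h3
    have hint' : MeasureTheory.IntegrableOn (fun t : ℝ => Real.exp (t * lam)) (Set.Ioi 0) := by
      have h1 : MeasureTheory.IntegrableOn
          (fun t : ℝ => Real.exp (-(-lam) * t)) (Set.Ioi 0) :=
        exp_neg_integrableOn_Ioi 0 (by linarith)
      have h2 : (fun t : ℝ => Real.exp (-(-lam) * t)) = fun t : ℝ => Real.exp (t * lam) := by
        funext t; ring_nf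
      rwa [h2] at h1
    have hres := MeasureTheory.integral_Ioi_of_hasDerivAt_of_tendsto hcont hder hint' htend
    rw [hres]
    rw [zero_mul, Real.exp_zero]
    field_simp
    ring
  constructor
  · rw [hfun]
    exact MeasureTheory.integrable_finset_sum _ hint
  · rw [hfun, MeasureTheory.integral_finset_sum _ hint]
    have hterm : ∀ T ∈ 𝒯, (∫ t in Set.Ioi (0:ℝ),
        ((mass m T)⁻¹ - (mass m (parentB d T i))⁻¹)
          * Real.exp (t * lamB d k m (parentB d T i) i))
        = -(lamB d k m (parentB d T i) i)⁻¹
          * ((mass m T)⁻¹ - (mass m (parentB d T i))⁻¹) := by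
      intro T hT
      rw [MeasureTheory.integral_const_mul, hIval _ (hneg T hT)]
      ring
    rw [Finset.sum_congr rfl hterm, hT_eq, Finset.sum_insert hinotS]
    have hmass : mass m ({i} : Finset X) = m i := by rw [mass, Finset.sum_singleton]
    rw [hPB0, hmass]
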